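/- An element A of the power monoid P_fin(ℕ) is cancellative (i.e., A + B = A + C implies B = C for all B, C ∈ P_fin(ℕ)) if and only if A is a singleton. Moreover, every A ∈ P_fin(ℕ) of cardinality at least 2 fails to be cancellative even inside ⟦A⟧: there exist B, C ∈ ⟦A⟧ with B ≠ C and A + B = A + C. -/

import Mathlib

open Pointwise

/-- The `n`-fold sumset `nA` of a finite set `A ⊆ ℕ` (with `0A = {0}`). -/
def nfold (A : Finset ℕ) : ℕ → Finset ℕ
  | 0 => {0}
  | n + 1 => nfold A n + A

/-- `⟦A⟧`: the smallest divisor-closed submonoid of `P_fin(ℕ)` containing `A`,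
i.e. the set of nonempty `B` dividing some `n`-fold sumset `nA` in `P_fin(ℕ)`. -/
def ddSub (A : Finset ℕ) : Set (Finset ℕ) :=
  {B | B.Nonempty ∧ ∃ n : ℕ, ∃ C : Finset ℕ, C.Nonempty ∧ nfold A n = B + C}

lemma nfold_three (A : Finset ℕ) : nfold A 3 = A + A + A := by
  show (({0} + A) + A) + A = A + A + A
  congr 2
  rw [Finset.singleton_add]
  simp

lemma key (A : Finset ℕ) (h2 : 2 ≤ A.card) :
    ∃ B C : Finset ℕ, B.Nonempty ∧ C.Nonempty ∧ B ≠ C ∧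
      A + B = A + A + A ∧ A + C = A + A + A := by
  have hA : A.Nonempty := Finset.card_pos.mp (by omega)
  set a0 := A.min' hA with ha0
  have ha0m : a0 ∈ A := A.min'_mem hA
  have hne : (A.erase a0).Nonempty := by
    rw [← Finset.card_pos, Finset.card_erase_of_mem ha0m]; omega
  set a1 := (A.erase a0).min' hne with ha1
  have ha1m' : a1 ∈ A.erase a0 := Finset.min'_mem _ _
  have ha1m : a1 ∈ A := Finset.mem_of_mem_erase ha1m'
  have ha1ne : a1 ≠ a0 := Finset.ne_of_mem_erase ha1m'
  have hlt : a0 < a1 := lt_of_le_of_ne (A.min'_le _ ha1m) (Ne.symm ha1ne)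
  have hCmem : a0 + a0 ∈ (A + A).erase (a0 + a1) := by
    refine Finset.mem_erase.mpr ⟨by omega, Finset.add_mem_add ha0m ha0m⟩
  refine ⟨A + A, (A + A).erase (a0 + a1), hA.add hA, ⟨_, hCmem⟩, ?_, ?_, ?_⟩
  · intro h
    have : a0 + a1 ∈ (A + A).erase (a0 + a1) := by
      rw [← h]; exact Finset.add_mem_add ha0m ha1m
    exact (Finset.mem_erase.mp this).1 rfl
  · rw [add_assoc]
  · apply Finset.Subset.antisymm
    · exact Finset.add_subset_add Finset.Subset.rfl (Finset.erase_subset _ _) |>.trans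
        (by rw [add_assoc])
    · rw [add_assoc]
      intro s hs
      rcases Finset.mem_add.mp hs with ⟨a, ha, t, ht, rfl⟩
      by_cases hteq : t = a0 + a1
      · subst hteq
        by_cases haeq : a = a0
        · subst haeq
          have : a0 + (a0 + a1) = a1 + (a0 + a0) := by ring
          rw [this]
          exact Finset.add_mem_add ha1m hCmem
        · have : a + (a0 + a1) = a0 + (a + a1) := by ring
          rw [this]
          refine Finset.add_mem_add ha0m (Finset.mem_erase.mpr
            ⟨by omega, Finset.add_mem_add ha ha1m⟩)
      · exact Finset.add_mem_add ha (Finset.mem_erase.mpr ⟨hteq, ht⟩)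

/-- An element `A` of `P_fin(ℕ)` is cancellative iff it is a singleton; moreover,
every `A` of cardinality at least `2` fails to be cancellative already in `⟦A⟧`. -/
theorem cancellative_iff_singleton :
    (∀ A : Finset ℕ, A.Nonempty →
      ((∀ B C : Finset ℕ, B.Nonempty → C.Nonempty → A + B = A + C → B = C) ↔
        ∃ a : ℕ, A = {a})) ∧
    (∀ A : Finset ℕ, 2 ≤ A.card →
      ∃ B ∈ ddSub A, ∃ C ∈ ddSub A, B ≠ C ∧ A + B = A + C) := by
  constructor
  · intro A hA
    constructor
    · intro h
      rw [← Finset.card_eq_one]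
      by_contra hc
      have h2 : 2 ≤ A.card := by
        have := Finset.card_pos.mpr hA
        omega
      obtain ⟨B, C, hB, hC, hBC, hAB, hAC⟩ := key A h2
      exact hBC (h B C hB hC (hAB.trans hAC.symm))
    · rintro ⟨a, rfl⟩ B C _ _ h
      have := Finset.image_injective (add_right_injective a)
      apply this
      simp only [Finset.singleton_add] at h; exact h
  · intro A h2
    have hA : A.Nonempty := Finset.card_pos.mp (by omega)
    obtain ⟨B, C, hB, hC, hBC, hAB, hAC⟩ := key A h2
    refine ⟨B, ⟨hB, 3, A, hA, ?_⟩, C, ⟨hC, 3, A, hA, ?_⟩, hBC, hAB.trans hAC.symm⟩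
    · rw [nfold_three, ← hAB, add_comm]
    · rw [nfold_three, ← hAC, add_comm]
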